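/- KL corollary: Let τ > 0 and take Ω = −τH where H is the Shannon entropy on Δ(A). Then for any policy π in a finite discounted MDP: E_{s∼μ^π}[ KL(π(s,·) ‖ π*_Ω(s,·)) ] = ((1−γ)/τ)·E_{s∼ρ}[ V_Ω^⋆(s) − V_Ω^π(s) ]. -/

import Mathlib

/-- Equality case of Gibbs' inequality: if `KL(p‖q) ≤ 0` then `p = q`. -/
lemma gibbs_eq {A : Type*} [Fintype A] (p q : A → ℝ)
    (hp0 : ∀ a, 0 ≤ p a) (hp1 : ∑ a, p a = 1)
    (hq0 : ∀ a, 0 < q a) (hq1 : ∑ a, q a = 1)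
    (hkl : ∑ a, p a * Real.log (p a / q a) ≤ 0) : ∀ a, p a = q a := by
  set g : A → ℝ := fun a => p a * Real.log (p a / q a) - (p a - q a) with hg
  have hg0 : ∀ a ∈ Finset.univ, 0 ≤ g a := by
    intro a _
    rcases eq_or_lt_of_le (hp0 a) with h | h
    · simp [hg, ← h, (hq0 a).le]
    · have hlog : Real.log (q a / p a) ≤ q a / p a - 1 :=
        Real.log_le_sub_one_of_pos (div_pos (hq0 a) h)
      have hdiv : Real.log (p a / q a) = - Real.log (q a / p a) := by
        rw [Real.log_div h.ne' (hq0 a).ne', Real.log_div (hq0 a).ne' h.ne']; ring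
      have key : p a - q a ≤ p a * Real.log (p a / q a) := by
        have := mul_le_mul_of_nonneg_left hlog h.le
        have h2 : p a * (q a / p a - 1) = q a - p a := by field_simp
        rw [hdiv]; nlinarith
      simp only [hg]; linarith
  have hsum : ∑ a, g a ≤ 0 := by
    have : ∑ a, g a = (∑ a, p a * Real.log (p a / q a)) - (∑ a, p a) + (∑ a, q a) := by
      simp [hg, Finset.sum_sub_distrib, sub_eq_add_neg, Finset.sum_add_distrib]; ring
    rw [this, hp1, hq1]; linarith
  have hzero : ∀ a ∈ Finset.univ, g a = 0 := by
    have : ∑ a, g a = 0 := le_antisymm hsum (Finset.sum_nonneg hg0)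
    exact (Finset.sum_eq_zero_iff_of_nonneg hg0).mp this
  intro a
  have hga := hzero a (Finset.mem_univ a)
  rcases eq_or_lt_of_le (hp0 a) with h | h
  · exfalso
    have : g a = q a := by simp [hg, ← h]
    exact absurd (this ▸ hga) (hq0 a).ne'
  · by_contra hne
    have hr : q a / p a ≠ 1 := by
      intro hc
      exact hne ((div_eq_one_iff_eq h.ne').mp hc).symm
    have hlog : Real.log (q a / p a) < q a / p a - 1 :=
      Real.log_lt_sub_one_of_pos (div_pos (hq0 a) h) hr
    have hdiv : Real.log (p a / q a) = - Real.log (q a / p a) := by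
      rw [Real.log_div h.ne' (hq0 a).ne', Real.log_div (hq0 a).ne' h.ne']; ring
    have key : p a - q a < p a * Real.log (p a / q a) := by
      have := mul_lt_mul_of_pos_left hlog h
      have h2 : p a * (q a / p a - 1) = q a - p a := by field_simp
      rw [hdiv]; nlinarith
    simp only [hg] at hga; linarith

/-- The maximizer of `p ↦ ⟨p,Q⟩ − τ∑ p log p` over the simplex is the softmax. -/
lemma softmax_char {A : Type*} [Fintype A] {τ : ℝ} (hτ : 0 < τ) (Q : A → ℝ) (ps : A → ℝ)
    (hps : ps ∈ stdSimplex ℝ A)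
    (hmax : ∀ p ∈ stdSimplex ℝ A,
      ∑ a, p a * Q a - τ * ∑ a, p a * Real.log (p a)
        ≤ ∑ a, ps a * Q a - τ * ∑ a, ps a * Real.log (ps a)) :
    ∀ a, ps a = Real.exp (Q a / τ) / (∑ b, Real.exp (Q b / τ)) := by
  intro a0
  haveI : Nonempty A := ⟨a0⟩
  set Z : ℝ := ∑ b, Real.exp (Q b / τ) with hZdef
  have hZ : 0 < Z := Finset.sum_pos (fun b _ => Real.exp_pos _) Finset.univ_nonempty
  set q : A → ℝ := fun a => Real.exp (Q a / τ) / Z with hqdef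
  have hq0 : ∀ a, 0 < q a := fun a => div_pos (Real.exp_pos _) hZ
  have hq1 : ∑ a, q a = 1 := by
    simp only [hqdef, ← Finset.sum_div]
    rw [← hZdef, div_self hZ.ne']
  have hQ : ∀ a, Q a = τ * Real.log (q a) + τ * Real.log Z := by
    intro a
    have : Real.log (q a) = Q a / τ - Real.log Z := by
      simp [hqdef, Real.log_div (Real.exp_ne_zero _) hZ.ne', Real.log_exp]
    rw [this]; field_simp; ring
  have hqs : q ∈ stdSimplex ℝ A := ⟨fun a => (hq0 a).le, hq1⟩
  have sum_formula : ∀ (p : A → ℝ), (∑ a, p a = 1) →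
      ∑ a, p a * Q a = τ * ∑ a, p a * Real.log (q a) + τ * Real.log Z := by
    intro p hp1
    calc ∑ a, p a * Q a
        = ∑ a, (τ * (p a * Real.log (q a)) + τ * Real.log Z * p a) := by
          refine Finset.sum_congr rfl fun a _ => ?_
          rw [hQ a]; ring
      _ = τ * ∑ a, p a * Real.log (q a) + τ * Real.log Z := by
          rw [Finset.sum_add_distrib, ← Finset.mul_sum, ← Finset.mul_sum, hp1, mul_one]
  have hFq : ∑ a, q a * Q a - τ * ∑ a, q a * Real.log (q a) = τ * Real.log Z := by
    rw [sum_formula q hq1]; ring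
  have hpsQ := sum_formula ps hps.2
  have hsplit : ∑ a, ps a * Real.log (ps a / q a)
      = ∑ a, ps a * Real.log (ps a) - ∑ a, ps a * Real.log (q a) := by
    rw [← Finset.sum_sub_distrib]
    refine Finset.sum_congr rfl fun a _ => ?_
    rcases eq_or_lt_of_le (hps.1 a) with h | h
    · simp [← h]
    · rw [Real.log_div h.ne' (hq0 a).ne']; ring
  have hmaxq := hmax q hqs
  have hKL : ∑ a, ps a * Real.log (ps a / q a) ≤ 0 := by
    rw [hsplit]
    have h1 : τ * (∑ a, ps a * Real.log (ps a) - ∑ a, ps a * Real.log (q a)) ≤ 0 := by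
      linarith [hmaxq, hFq, hpsQ]
    nlinarith [h1]
  exact gibbs_eq ps q hps.1 hps.2 hq0 hq1 hKL a0



/-- KL corollary: with entropy regularizer `Ω = −τH` (`τ > 0`), for any policy `π`,
`E_{s∼μ^π}[KL(π(s,·) ‖ π⋆(s,·))] = ((1−γ)/τ)·E_{s∼ρ}[V_Ω^⋆(s) − V_Ω^π(s)]`. -/
theorem entropy_regularized_kl_identity
    {S A : Type*} [Fintype S] [Fintype A]
    (P : S → A → S → ℝ) (hP0 : ∀ s a s', 0 ≤ P s a s') (hP1 : ∀ s a, ∑ s', P s a s' = 1)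
    (r : S → A → ℝ) (ρ : S → ℝ) (hρ : ρ ∈ stdSimplex ℝ S)
    (γ : ℝ) (hγ0 : 0 ≤ γ) (hγ1 : γ < 1)
    (τ : ℝ) (hτ : 0 < τ)
    -- the regularizer Ω = −τH, i.e. Ω p = τ ∑ₐ p a log (p a)
    (Ω : (A → ℝ) → ℝ) (hΩ : ∀ p, Ω p = τ * ∑ a, p a * Real.log (p a))
    -- optimal regularized value functions and optimal policy
    (Qstar : S → A → ℝ) (Vstar : S → ℝ) (πstar : S → A → ℝ)
    (hπstar : ∀ s, πstar s ∈ stdSimplex ℝ A)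
    (hQstar : ∀ s a, Qstar s a = r s a + γ * ∑ s', P s a s' * Vstar s')
    (hVstar : ∀ s, Vstar s = ∑ a, πstar s a * Qstar s a - Ω (πstar s))
    (hmax : ∀ s, ∀ p ∈ stdSimplex ℝ A,
      ∑ a, p a * Qstar s a - Ω p ≤ ∑ a, πstar s a * Qstar s a - Ω (πstar s))
    -- an arbitrary policy `π` with its regularized value functions
    (π : S → A → ℝ) (hπ : ∀ s, π s ∈ stdSimplex ℝ A)
    (Qπ : S → A → ℝ) (Vπ : S → ℝ)
    (hQπ : ∀ s a, Qπ s a = r s a + γ * ∑ s', P s a s' * Vπ s')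
    (hVπ : ∀ s, Vπ s = ∑ a, π s a * Qπ s a - Ω (π s))
    -- discounted stationary distribution of `π`
    (μ : S → ℝ)
    (hμ : ∀ s', μ s' = (1 - γ) * ρ s' + γ * ∑ s, (∑ a, P s a s' * π s a) * μ s) :
    ∑ s, μ s * (∑ a, π s a * Real.log (π s a / πstar s a))
      = ((1 - γ) / τ) * ∑ s, ρ s * (Vstar s - Vπ s) := by
  rcases isEmpty_or_nonempty S with hS | hS
  · simp
  rcases isEmpty_or_nonempty A with hA | hA
  · exact absurd (hπstar (Classical.arbitrary S)).2 (by simp)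
  set D : S → ℝ := fun s => Vstar s - Vπ s with hD
  -- per-state identity
  have key : ∀ s, τ * (∑ a, π s a * Real.log (π s a / πstar s a))
      = D s - γ * ∑ a, π s a * ∑ s', P s a s' * D s' := by
    intro s
    set Z : ℝ := ∑ b, Real.exp (Qstar s b / τ) with hZdef
    have hZ : 0 < Z := Finset.sum_pos (fun b _ => Real.exp_pos _) Finset.univ_nonempty
    have hsoft : ∀ a, πstar s a = Real.exp (Qstar s a / τ) / Z := by
      refine softmax_char hτ (Qstar s) (πstar s) (hπstar s) fun p hp => ?_
      have := hmax s p hp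
      rwa [hΩ, hΩ] at this
    have hstar_pos : ∀ a, 0 < πstar s a := fun a => by
      rw [hsoft a]; exact div_pos (Real.exp_pos _) hZ
    have hlogstar : ∀ a, τ * Real.log (πstar s a) = Qstar s a - τ * Real.log Z := by
      intro a
      rw [hsoft a, Real.log_div (Real.exp_ne_zero _) hZ.ne', Real.log_exp]
      field_simp
    have hsum1 : ∑ a, πstar s a = 1 := (hπstar s).2
    have hπ1 : ∑ a, π s a = 1 := (hπ s).2
    have hVZ : Vstar s = τ * Real.log Z := by
      have h1 : ∑ a, πstar s a * Qstar s a
          = τ * ∑ a, πstar s a * Real.log (πstar s a) + τ * Real.log Z := by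
        calc ∑ a, πstar s a * Qstar s a
            = ∑ a, (τ * (πstar s a * Real.log (πstar s a)) + τ * Real.log Z * πstar s a) := by
              refine Finset.sum_congr rfl fun a _ => ?_
              linear_combination (-(πstar s a)) * (hlogstar a)
          _ = τ * ∑ a, πstar s a * Real.log (πstar s a) + τ * Real.log Z := by
              rw [Finset.sum_add_distrib, ← Finset.mul_sum, ← Finset.mul_sum, hsum1, mul_one]
      rw [hVstar s, hΩ, h1]; ring
    -- split the KL sum
    have hterm : ∀ a, τ * (π s a * Real.log (π s a / πstar s a))
        = τ * (π s a * Real.log (π s a)) - π s a * Qstar s a + π s a * Vstar s := by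
      intro a
      rcases eq_or_lt_of_le ((hπ s).1 a) with h | h
      · simp [← h]
      · rw [Real.log_div h.ne' (hstar_pos a).ne', hVZ]
        linear_combination (-(π s a)) * (hlogstar a)
    have hKLsum : τ * (∑ a, π s a * Real.log (π s a / πstar s a))
        = τ * (∑ a, π s a * Real.log (π s a)) - ∑ a, π s a * Qstar s a + Vstar s := by
      have hc : ∑ a, τ * (π s a * Real.log (π s a / πstar s a))
          = ∑ a, (τ * (π s a * Real.log (π s a)) - π s a * Qstar s a + π s a * Vstar s) :=
        Finset.sum_congr rfl fun a _ => hterm a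
      rw [Finset.mul_sum, hc, Finset.sum_add_distrib, Finset.sum_sub_distrib,
        ← Finset.sum_mul, hπ1, one_mul, ← Finset.mul_sum]
    have hΩπ : τ * (∑ a, π s a * Real.log (π s a)) = ∑ a, π s a * Qπ s a - Vπ s := by
      have := hVπ s; rw [hΩ] at this; linarith
    have hQdiff : ∀ a, Qstar s a - Qπ s a = γ * ∑ s', P s a s' * D s' := by
      intro a
      rw [hQstar s a, hQπ s a, hD]
      have : ∑ s', P s a s' * (Vstar s' - Vπ s')
          = (∑ s', P s a s' * Vstar s') - ∑ s', P s a s' * Vπ s' := by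
        rw [← Finset.sum_sub_distrib]
        exact Finset.sum_congr rfl fun s' _ => by ring
      rw [this]; ring
    have hQsum : ∑ a, π s a * Qstar s a
        = ∑ a, π s a * Qπ s a + γ * ∑ a, π s a * ∑ s', P s a s' * D s' := by
      rw [Finset.mul_sum]
      rw [← Finset.sum_add_distrib]
      refine Finset.sum_congr rfl fun a _ => ?_
      linear_combination (π s a) * (hQdiff a)
    rw [hKLsum, hΩπ, hQsum, hD]
    ring
  -- sum over states
  have swap : ∑ s, μ s * ∑ a, π s a * ∑ s', P s a s' * D s'
      = ∑ s', (∑ s, (∑ a, P s a s' * π s a) * μ s) * D s' := by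
    have step : ∀ s, μ s * ∑ a, π s a * ∑ s', P s a s' * D s'
        = ∑ s', (∑ a, P s a s' * π s a) * μ s * D s' := by
      intro s
      simp only [Finset.mul_sum, Finset.sum_mul]
      rw [Finset.sum_comm]
      exact Finset.sum_congr rfl fun s' _ => Finset.sum_congr rfl fun a _ => by ring
    rw [Finset.sum_congr rfl fun s _ => step s, Finset.sum_comm]
    exact Finset.sum_congr rfl fun s' _ => by rw [Finset.sum_mul]
  have h2 : γ * ∑ s', (∑ s, (∑ a, P s a s' * π s a) * μ s) * D s'
      = ∑ s', (μ s' - (1 - γ) * ρ s') * D s' := by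
    rw [Finset.mul_sum]
    refine Finset.sum_congr rfl fun s' _ => ?_
    linear_combination (-(D s')) * (hμ s')
  have h3 : ∑ s', (μ s' - (1 - γ) * ρ s') * D s'
      = ∑ s, μ s * D s - (1 - γ) * ∑ s, ρ s * D s := by
    rw [Finset.mul_sum, ← Finset.sum_sub_distrib]
    exact Finset.sum_congr rfl fun s _ => by ring
  have main : τ * ∑ s, μ s * (∑ a, π s a * Real.log (π s a / πstar s a))
      = (1 - γ) * ∑ s, ρ s * D s := by
    calc τ * ∑ s, μ s * (∑ a, π s a * Real.log (π s a / πstar s a))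
        = ∑ s, μ s * (τ * (∑ a, π s a * Real.log (π s a / πstar s a))) := by
          rw [Finset.mul_sum]; exact Finset.sum_congr rfl fun s _ => by ring
      _ = ∑ s, μ s * (D s - γ * ∑ a, π s a * ∑ s', P s a s' * D s') :=
          Finset.sum_congr rfl fun s _ => by rw [key s]
      _ = ∑ s, μ s * D s - γ * ∑ s, μ s * ∑ a, π s a * ∑ s', P s a s' * D s' := by
          rw [Finset.mul_sum, ← Finset.sum_sub_distrib]
          exact Finset.sum_congr rfl fun s _ => by ring
      _ = ∑ s, μ s * D s - (∑ s, μ s * D s - (1 - γ) * ∑ s, ρ s * D s) := by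
          rw [swap, h2, h3]
      _ = (1 - γ) * ∑ s, ρ s * D s := by ring
  have goalD : ∑ s, ρ s * (Vstar s - Vπ s) = ∑ s, ρ s * D s := rfl
  rw [goalD, div_mul_eq_mul_div, ← main, mul_div_cancel_left₀ _ hτ.ne']
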